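/- Let p ∈ (0,1) and let K be a CRG whose vertex set is partitioned into nonempty sets S_1, …, S_ℓ such that every edge of K joining vertices in distinct parts is gray. Let K^{(i)} denote the sub-CRG induced on S_i. Then all the quantities g_K(p), g_{K^{(1)}}(p), …, g_{K^{(ℓ)}}(p) are positive and 1/g_K(p) = Σ_{i=1}^{ℓ} 1/g_{K^{(i)}}(p). -/

import Mathlib

/-- Colors for edges of a colored regularity graph. -/
inductive EColor : Type
  | white
  | gray
  | black
deriving DecidableEq

/-- A colored regularity graph (CRG) on a finite vertex type `V`: each vertex is
white or black (`vWhite v = true` means white), and each pair of distinct vertices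
gets a symmetric edge color (white, gray or black). -/
structure CRG (V : Type) [Fintype V] where
  vWhite : V → Bool
  ecolor : V → V → EColor
  ecolor_symm : ∀ u v, ecolor u v = ecolor v u

namespace CRG

variable {V : Type} [Fintype V] [DecidableEq V]

/-- The matrix `M_K(p)`. -/
noncomputable def M (K : CRG V) (p : ℝ) (u v : V) : ℝ :=
  if u = v then (if K.vWhite u then p else 1 - p)
  else
    match K.ecolor u v with
    | EColor.white => p
    | EColor.black => 1 - p
    | EColor.gray => 0

/-- The function `g_K(p)`: the minimum of `xᵀ M_K(p) x` over nonnegative weight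
vectors summing to `1`. -/
noncomputable def g (K : CRG V) (p : ℝ) : ℝ :=
  sInf {r : ℝ | ∃ x : V → ℝ, (∀ v, 0 ≤ x v) ∧ (∑ v, x v) = 1 ∧
    r = ∑ u, ∑ v, x u * K.M p u v * x v}

/-- The sub-CRG induced on a subset `s` of the vertices. -/
def sub (K : CRG V) (s : Finset V) : CRG {v // v ∈ s} where
  vWhite := fun v => K.vWhite v.1
  ecolor := fun u v => K.ecolor u.1 v.1
  ecolor_symm := fun u v => K.ecolor_symm u.1 v.1

/-- `K` is `p`-core if `g_K(p) < g_{K'}(p)` for every proper (nonempty) sub-CRG `K'`. -/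
def IsPCore (K : CRG V) (p : ℝ) : Prop :=
  ∀ s : Finset V, s.Nonempty → s ≠ Finset.univ → K.g p < (K.sub s).g p

/-- `x` is an optimal weight vector for `K` at `p`. -/
def IsOptWeight (K : CRG V) (p : ℝ) (x : V → ℝ) : Prop :=
  (∀ v, 0 ≤ x v) ∧ (∑ v, x v) = 1 ∧
    (∑ u, ∑ v, x u * K.M p u v * x v) = K.g p

/-- The gray degree `d_G(v)`: total weight of gray neighbors of `v`. -/
noncomputable def dG (K : CRG V) (x : V → ℝ) (v : V) : ℝ :=
  ∑ w ∈ Finset.univ.filter fun w => w ≠ v ∧ K.ecolor v w = EColor.gray, x w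

/-- The white degree `d_W(v)`: total weight of white neighbors of `v`, including `v`
itself if `v` is white. -/
noncomputable def dW (K : CRG V) (x : V → ℝ) (v : V) : ℝ :=
  (∑ w ∈ Finset.univ.filter fun w => w ≠ v ∧ K.ecolor v w = EColor.white, x w) +
    (if K.vWhite v then x v else 0)

/-- The black degree `d_B(v)`: total weight of black neighbors of `v`, including `v`
itself if `v` is black. -/
noncomputable def dB (K : CRG V) (x : V → ℝ) (v : V) : ℝ :=
  (∑ w ∈ Finset.univ.filter fun w => w ≠ v ∧ K.ecolor v w = EColor.black, x w) +
    (if K.vWhite v then 0 else x v)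

/-- The number of gray neighbors of `v`. -/
def grayDeg (K : CRG V) (v : V) : ℕ :=
  (Finset.univ.filter fun w => w ≠ v ∧ K.ecolor v w = EColor.gray).card

end CRG

/-- A graph `H` embeds in a CRG `K`, written `H ↦ K`. -/
def EmbedsIn {α : Type*} {V : Type} [Fintype V] (H : SimpleGraph α) (K : CRG V) : Prop :=
  ∃ φ : α → V,
    (∀ a b : α, H.Adj a b →
      (φ a = φ b ∧ K.vWhite (φ a) = false) ∨
      (φ a ≠ φ b ∧ (K.ecolor (φ a) (φ b) = EColor.black ∨ K.ecolor (φ a) (φ b) = EColor.gray))) ∧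
    (∀ a b : α, a ≠ b → ¬H.Adj a b →
      (φ a = φ b ∧ K.vWhite (φ a) = true) ∨
      (φ a ≠ φ b ∧ (K.ecolor (φ a) (φ b) = EColor.white ∨ K.ecolor (φ a) (φ b) = EColor.gray)))

section CRGAux

variable {W : Type} [Fintype W] [DecidableEq W]

lemma CRG.M_nonneg (K : CRG W) {p : ℝ} (hp : p ∈ Set.Ioo (0:ℝ) 1) (u v : W) :
    0 ≤ K.M p u v := by
  obtain ⟨h0, h1⟩ := hp
  unfold CRG.M
  by_cases h : u = v
  · rw [if_pos h]; split_ifs <;> linarith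
  · rw [if_neg h]
    cases hc : K.ecolor u v <;> simp <;> linarith

lemma CRG.M_diag (K : CRG W) (p : ℝ) (u : W) : min p (1 - p) ≤ K.M p u u := by
  unfold CRG.M
  rw [if_pos rfl]
  split_ifs
  · exact min_le_left _ _
  · exact min_le_right _ _

lemma CRG.feas_nonempty [Nonempty W] (K : CRG W) (p : ℝ) :
    Set.Nonempty {r : ℝ | ∃ x : W → ℝ, (∀ v, 0 ≤ x v) ∧ (∑ v, x v) = 1 ∧
      r = ∑ u, ∑ v, x u * K.M p u v * x v} := by
  obtain ⟨v0⟩ := ‹Nonempty W›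
  refine ⟨_, fun v => if v = v0 then 1 else 0, fun v => ?_, ?_, rfl⟩
  · dsimp only; split_ifs <;> norm_num
  · simp

lemma CRG.feas_bddBelow (K : CRG W) {p : ℝ} (hp : p ∈ Set.Ioo (0:ℝ) 1) :
    BddBelow {r : ℝ | ∃ x : W → ℝ, (∀ v, 0 ≤ x v) ∧ (∑ v, x v) = 1 ∧
      r = ∑ u, ∑ v, x u * K.M p u v * x v} := by
  refine ⟨0, fun r hr => ?_⟩
  obtain ⟨x, hnn, hsum, rfl⟩ := hr
  refine Finset.sum_nonneg fun u _ => Finset.sum_nonneg fun v _ =>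
    mul_nonneg (mul_nonneg (hnn u) (K.M_nonneg hp u v)) (hnn v)

lemma CRG.g_le (K : CRG W) {p : ℝ} (hp : p ∈ Set.Ioo (0:ℝ) 1) {x : W → ℝ}
    (hnn : ∀ v, 0 ≤ x v) (hsum : (∑ v, x v) = 1) :
    K.g p ≤ ∑ u, ∑ v, x u * K.M p u v * x v :=
  csInf_le (K.feas_bddBelow hp) ⟨x, hnn, hsum, rfl⟩

lemma CRG.le_g [Nonempty W] (K : CRG W) (p : ℝ) {b : ℝ}
    (hb : ∀ x : W → ℝ, (∀ v, 0 ≤ x v) → (∑ v, x v) = 1 →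
      b ≤ ∑ u, ∑ v, x u * K.M p u v * x v) :
    b ≤ K.g p := by
  refine le_csInf (K.feas_nonempty p) ?_
  rintro r ⟨x, hnn, hsum, rfl⟩
  exact hb x hnn hsum

lemma CRG.exists_lt_g_add [Nonempty W] (K : CRG W) (p : ℝ) {ε : ℝ} (hε : 0 < ε) :
    ∃ x : W → ℝ, (∀ v, 0 ≤ x v) ∧ (∑ v, x v) = 1 ∧
      (∑ u, ∑ v, x u * K.M p u v * x v) < K.g p + ε := by
  obtain ⟨r, hr, hlt⟩ := Real.lt_sInf_add_pos (K.feas_nonempty p) hε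
  obtain ⟨x, hnn, hsum, rfl⟩ := hr
  exact ⟨x, hnn, hsum, hlt⟩

lemma CRG.g_pos [Nonempty W] (K : CRG W) {p : ℝ} (hp : p ∈ Set.Ioo (0:ℝ) 1) :
    0 < K.g p := by
  obtain ⟨hp0, hp1⟩ := hp
  have hc0 : 0 < min p (1 - p) := lt_min hp0 (by linarith)
  have hcard : 0 < (Fintype.card W : ℝ) := by
    exact_mod_cast Fintype.card_pos
  have hlb : min p (1 - p) / Fintype.card W ≤ K.g p := by
    refine K.le_g p fun x hnn hsum => ?_
    have hterm : ∀ u v, 0 ≤ x u * K.M p u v * x v := fun u v =>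
      mul_nonneg (mul_nonneg (hnn u) (K.M_nonneg ⟨hp0, hp1⟩ u v)) (hnn v)
    have h1 : ∑ u, min p (1 - p) * x u ^ 2 ≤ ∑ u, ∑ v, x u * K.M p u v * x v := by
      refine Finset.sum_le_sum fun u _ => ?_
      have h2 : x u * K.M p u u * x u ≤ ∑ v, x u * K.M p u v * x v :=
        Finset.single_le_sum (fun v _ => hterm u v) (Finset.mem_univ u)
      have h3 := K.M_diag p u
      nlinarith [hnn u, sq_nonneg (x u)]
    have h4 : (1:ℝ) ≤ Fintype.card W * ∑ u, x u ^ 2 := by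
      have h5 := sq_sum_le_card_mul_sum_sq (s := Finset.univ) (f := x)
      rw [hsum] at h5
      simpa using h5
    calc min p (1 - p) / Fintype.card W ≤ min p (1 - p) * ∑ u, x u ^ 2 := by
          rw [div_le_iff₀ hcard]; nlinarith
      _ = ∑ u, min p (1 - p) * x u ^ 2 := by rw [Finset.mul_sum]
      _ ≤ _ := h1
  exact lt_of_lt_of_le (by positivity) hlb

end CRGAux

theorem g_of_components {V : Type} [Fintype V] [DecidableEq V] [Nonempty V]
    (p : ℝ) (hp : p ∈ Set.Ioo (0 : ℝ) 1) (K : CRG V)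
    (ℓ : ℕ) (S : Fin ℓ → Finset V)
    (hne : ∀ i, (S i).Nonempty)
    (hdisj : ∀ i j, i ≠ j → Disjoint (S i) (S j))
    (hcover : ∀ v : V, ∃ i, v ∈ S i)
    (hgray : ∀ i j, i ≠ j → ∀ u ∈ S i, ∀ v ∈ S j, K.ecolor u v = EColor.gray) :
    0 < K.g p ∧ (∀ i, 0 < (K.sub (S i)).g p) ∧
      (K.g p)⁻¹ = ∑ i, ((K.sub (S i)).g p)⁻¹ := by
  classical
  obtain ⟨hp0, hp1⟩ := hp
  have hp' : p ∈ Set.Ioo (0:ℝ) 1 := ⟨hp0, hp1⟩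
  have hWne : ∀ i, Nonempty {v // v ∈ S i} := fun i =>
    ⟨⟨(hne i).choose, (hne i).choose_spec⟩⟩
  have gpos : ∀ i, 0 < (K.sub (S i)).g p := fun i =>
    haveI := hWne i
    (K.sub (S i)).g_pos hp'
  set gi : Fin ℓ → ℝ := fun i => (K.sub (S i)).g p with hgi
  set T : ℝ := ∑ i, (gi i)⁻¹ with hT
  haveI hFin : Nonempty (Fin ℓ) := by
    obtain ⟨i, _⟩ := hcover (Classical.arbitrary V); exact ⟨i⟩
  have hT0 : 0 < T := by
    rw [hT]
    exact Finset.sum_pos (fun i _ => inv_pos.2 (gpos i)) Finset.univ_nonempty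
  set idx : V → Fin ℓ := fun v => (hcover v).choose with hidxdef
  have hidx : ∀ v, v ∈ S (idx v) := fun v => (hcover v).choose_spec
  have hidx_eq : ∀ {v : V} {i}, v ∈ S i → idx v = i := by
    intro v i hv
    by_contra h
    exact Finset.disjoint_left.1 (hdisj _ _ h) (hidx v) hv
  have hfib : ∀ i, Finset.univ.filter (fun v => idx v = i) = S i := by
    intro i; ext v
    simp only [Finset.mem_filter, Finset.mem_univ, true_and]
    exact ⟨fun h => h ▸ hidx v, fun h => hidx_eq h⟩
  have hdecomp : ∀ f : V → ℝ, (∑ v, f v) = ∑ i, ∑ v ∈ S i, f v := by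
    intro f
    rw [← Finset.sum_fiberwise Finset.univ idx f]
    exact Finset.sum_congr rfl fun i _ => by rw [hfib]
  have hMzero : ∀ {i j : Fin ℓ}, i ≠ j → ∀ u ∈ S i, ∀ v ∈ S j, K.M p u v = 0 := by
    intro i j hij u hu v hv
    have huv : u ≠ v := by
      intro h; subst h
      exact Finset.disjoint_left.1 (hdisj i j hij) hu hv
    unfold CRG.M
    rw [if_neg huv, hgray i j hij u hu v hv]
  have hQdec : ∀ y : V → ℝ, (∑ u, ∑ v, y u * K.M p u v * y v)
      = ∑ i, ∑ u ∈ S i, ∑ v ∈ S i, y u * K.M p u v * y v := by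
    intro y
    rw [hdecomp (fun u => ∑ v, y u * K.M p u v * y v)]
    refine Finset.sum_congr rfl fun i _ => Finset.sum_congr rfl fun u hu => ?_
    rw [hdecomp (fun v => y u * K.M p u v * y v)]
    rw [Finset.sum_eq_single i]
    · intro j _ hji
      exact Finset.sum_eq_zero fun v hv => by rw [hMzero hji.symm u hu v hv]; ring
    · intro h; exact absurd (Finset.mem_univ i) h
  have hMsub : ∀ (i : Fin ℓ) (u v : {w // w ∈ S i}),
      (K.sub (S i)).M p u v = K.M p u.1 v.1 := by
    intro i u v
    by_cases h : u = v
    · subst h; simp [CRG.M, CRG.sub]; rfl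
    · have h' : u.1 ≠ v.1 := fun hh => h (Subtype.ext hh)
      simp [CRG.M, CRG.sub, h, h']
  have hwt : ∀ (i : Fin ℓ) (x : V → ℝ) (c : ℝ),
      (∑ u : {w // w ∈ S i}, c * x u.1) = c * ∑ u ∈ S i, x u := by
    intro i x c
    rw [Finset.univ_eq_attach, Finset.sum_attach (S i) (fun w => c * x w)]
    exact (Finset.mul_sum _ _ _).symm
  have hval : ∀ (i : Fin ℓ) (x : V → ℝ) (c : ℝ),
      (∑ u, ∑ v, (c * x u.1) * (K.sub (S i)).M p u v * (c * x v.1))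
        = c ^ 2 * ∑ u ∈ S i, ∑ v ∈ S i, x u * K.M p u v * x v := by
    intro i x c
    simp_rw [hMsub i]
    simp only [Finset.univ_eq_attach]
    rw [Finset.sum_attach (S i)
      (fun w => ∑ v ∈ (S i).attach, (c * x w) * K.M p w v.1 * (c * x v.1))]
    rw [Finset.mul_sum]
    refine Finset.sum_congr rfl fun u hu => ?_
    rw [Finset.sum_attach (S i) (fun w => (c * x u) * K.M p u w * (c * x w)),
      Finset.mul_sum]
    exact Finset.sum_congr rfl fun v hv => by ring
  have hge : T⁻¹ ≤ K.g p := by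
    refine K.le_g p fun x hnn hsum => ?_
    set lam : Fin ℓ → ℝ := fun i => ∑ v ∈ S i, x v with hlamdef
    have hlnn : ∀ i, 0 ≤ lam i := fun i => Finset.sum_nonneg fun v _ => hnn v
    have hlsum : (∑ i, lam i) = 1 := by
      simp only [hlamdef]
      rw [← hdecomp x]; exact hsum
    have hQi : ∀ i, gi i * lam i ^ 2 ≤ ∑ u ∈ S i, ∑ v ∈ S i, x u * K.M p u v * x v := by
      intro i
      rcases eq_or_lt_of_le (hlnn i) with h0 | h0
      · have hx0 : ∀ v ∈ S i, x v = 0 :=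
          (Finset.sum_eq_zero_iff_of_nonneg fun v _ => hnn v).1 h0.symm
        have hz : ∑ u ∈ S i, ∑ v ∈ S i, x u * K.M p u v * x v = 0 :=
          Finset.sum_eq_zero fun u hu => Finset.sum_eq_zero fun v hv => by
            rw [hx0 u hu]; ring
        rw [hz, ← h0]; norm_num
      · haveI := hWne i
        have hle1 : gi i ≤ ∑ u, ∑ v,
            ((lam i)⁻¹ * x u.1) * (K.sub (S i)).M p u v * ((lam i)⁻¹ * x v.1) :=
          (K.sub (S i)).g_le hp'
            (fun u => mul_nonneg (inv_nonneg.2 (hlnn i)) (hnn u.1))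
            (by rw [hwt i x (lam i)⁻¹]; exact inv_mul_cancel₀ h0.ne')
        rw [hval i x (lam i)⁻¹] at hle1
        calc gi i * lam i ^ 2
            ≤ (((lam i)⁻¹) ^ 2 * (∑ u ∈ S i, ∑ v ∈ S i, x u * K.M p u v * x v)) * lam i ^ 2 :=
              mul_le_mul_of_nonneg_right hle1 (sq_nonneg _)
          _ = _ := by field_simp
    have hCS : (1:ℝ) ≤ (∑ i, gi i * lam i ^ 2) * T := by
      have h := Finset.sum_mul_sq_le_sq_mul_sq Finset.univ
        (fun i => Real.sqrt (gi i) * lam i) (fun i => (Real.sqrt (gi i))⁻¹)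
      have e1 : ∀ i : Fin ℓ, Real.sqrt (gi i) * lam i * (Real.sqrt (gi i))⁻¹ = lam i := by
        intro i
        have hs : Real.sqrt (gi i) ≠ 0 := (Real.sqrt_pos.2 (gpos i)).ne'
        field_simp
      have e2 : ∀ i : Fin ℓ, (Real.sqrt (gi i) * lam i) ^ 2 = gi i * lam i ^ 2 := by
        intro i; rw [mul_pow, Real.sq_sqrt (gpos i).le]
      have e3 : ∀ i : Fin ℓ, ((Real.sqrt (gi i))⁻¹) ^ 2 = (gi i)⁻¹ := by
        intro i; rw [inv_pow, Real.sq_sqrt (gpos i).le]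
      simp_rw [e1, e2, e3] at h
      rw [hlsum, one_pow] at h
      rw [hT]
      exact h
    have h6 : T⁻¹ ≤ ∑ i, gi i * lam i ^ 2 := by
      rw [inv_eq_one_div, div_le_iff₀ hT0]
      linarith [hCS]
    rw [hQdec x]
    calc T⁻¹ ≤ ∑ i, gi i * lam i ^ 2 := h6
      _ ≤ _ := Finset.sum_le_sum fun i _ => hQi i
  have hle : ∀ ε : ℝ, 0 < ε → K.g p ≤ T⁻¹ + ε := by
    intro ε hε
    have hex : ∀ i : Fin ℓ, ∃ z : {v // v ∈ S i} → ℝ, (∀ v, 0 ≤ z v) ∧ (∑ v, z v) = 1 ∧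
        (∑ u, ∑ v, z u * (K.sub (S i)).M p u v * z v) < gi i + ε :=
      fun i => haveI := hWne i; (K.sub (S i)).exists_lt_g_add p hε
    choose z hznn hzsum hzval using hex
    set lam : Fin ℓ → ℝ := fun i => (gi i)⁻¹ / T with hlamdef
    have hlnn : ∀ i, 0 ≤ lam i := fun i =>
      div_nonneg (inv_nonneg.2 (gpos i).le) hT0.le
    have hlsum : (∑ i, lam i) = 1 := by
      simp only [hlamdef]
      rw [← Finset.sum_div, ← hT]
      exact div_self hT0.ne'
    set xe : Fin ℓ → V → ℝ := fun i v => if h : v ∈ S i then z i ⟨v, h⟩ else 0 with hxedef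
    have hxenn : ∀ i v, 0 ≤ xe i v := by
      intro i v
      simp only [hxedef]
      split_ifs with h
      · exact hznn i ⟨v, h⟩
      · exact le_refl 0
    have hxe_eq : ∀ (i : Fin ℓ) (u : {w // w ∈ S i}), xe i u.1 = z i u := by
      intro i u
      simp only [hxedef]
      rw [dif_pos u.2]
    have hxesum : ∀ i, (∑ v ∈ S i, xe i v) = 1 := by
      intro i
      have h1 := hwt i (xe i) 1
      simp only [one_mul] at h1
      rw [← h1,
        show (∑ u : {w // w ∈ S i}, xe i u.1) = ∑ u, z i u from
          Finset.sum_congr rfl fun u _ => hxe_eq i u]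
      exact hzsum i
    have hxeval : ∀ i, (∑ u ∈ S i, ∑ v ∈ S i, xe i u * K.M p u v * xe i v)
        = ∑ u, ∑ v, z i u * (K.sub (S i)).M p u v * z i v := by
      intro i
      have h1 := hval i (xe i) 1
      simp only [one_mul, one_pow] at h1
      rw [← h1]
      exact Finset.sum_congr rfl fun u _ => Finset.sum_congr rfl fun v _ => by
        rw [hxe_eq i u, hxe_eq i v]
    set y : V → ℝ := fun v => lam (idx v) * xe (idx v) v with hydef
    have hy_eq : ∀ (i : Fin ℓ) v, v ∈ S i → y v = lam i * xe i v := by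
      intro i v hv
      have h1 : idx v = i := hidx_eq hv
      simp only [hydef, h1]
    have hynn : ∀ v, 0 ≤ y v := fun v => mul_nonneg (hlnn _) (hxenn _ _)
    have hysum : (∑ v, y v) = 1 := by
      rw [hdecomp y]
      have h2 : ∀ i : Fin ℓ, (∑ v ∈ S i, y v) = lam i := by
        intro i
        rw [Finset.sum_congr rfl fun v hv => hy_eq i v hv, ← Finset.mul_sum,
          hxesum i, mul_one]
      rw [Finset.sum_congr rfl fun i _ => h2 i, hlsum]
    have hyval : (∑ u, ∑ v, y u * K.M p u v * y v)
        = ∑ i, lam i ^ 2 * (∑ u, ∑ v, z i u * (K.sub (S i)).M p u v * z i v) := by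
      rw [hQdec y]
      refine Finset.sum_congr rfl fun i _ => ?_
      rw [← hxeval i, Finset.mul_sum]
      refine Finset.sum_congr rfl fun u hu => ?_
      rw [Finset.mul_sum]
      refine Finset.sum_congr rfl fun v hv => ?_
      rw [hy_eq i u hu, hy_eq i v hv]; ring
    have hmain : K.g p ≤ ∑ i, lam i ^ 2 *
        (∑ u, ∑ v, z i u * (K.sub (S i)).M p u v * z i v) := by
      rw [← hyval]; exact K.g_le hp' hynn hysum
    have hstep : ∑ i, lam i ^ 2 * (∑ u, ∑ v, z i u * (K.sub (S i)).M p u v * z i v)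
        ≤ ∑ i, lam i ^ 2 * (gi i + ε) :=
      Finset.sum_le_sum fun i _ => mul_le_mul_of_nonneg_left (hzval i).le (sq_nonneg _)
    have hA : (∑ i, lam i ^ 2 * gi i) = T⁻¹ := by
      have h3 : ∀ i : Fin ℓ, lam i ^ 2 * gi i = (gi i)⁻¹ / T ^ 2 := by
        intro i
        have hg0 : gi i ≠ 0 := (gpos i).ne'
        simp only [hlamdef]
        field_simp
      rw [Finset.sum_congr rfl fun i _ => h3 i, ← Finset.sum_div, ← hT, sq]
      rw [div_eq_mul_inv, mul_inv, ← mul_assoc, mul_inv_cancel₀ hT0.ne', one_mul]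
    have hB : (∑ i, lam i ^ 2) ≤ 1 := by
      have h1 : ∀ i : Fin ℓ, lam i ≤ 1 := by
        intro i
        calc lam i ≤ ∑ j, lam j :=
              Finset.single_le_sum (fun j _ => hlnn j) (Finset.mem_univ i)
          _ = 1 := hlsum
      calc (∑ i, lam i ^ 2) ≤ ∑ i, lam i :=
            Finset.sum_le_sum fun i _ => by nlinarith [hlnn i, h1 i]
        _ = 1 := hlsum
    have hfin : (∑ i, lam i ^ 2 * (gi i + ε)) ≤ T⁻¹ + ε := by
      have e : (∑ i, lam i ^ 2 * (gi i + ε))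
          = (∑ i, lam i ^ 2 * gi i) + ε * ∑ i, lam i ^ 2 := by
        rw [Finset.mul_sum, ← Finset.sum_add_distrib]
        exact Finset.sum_congr rfl fun i _ => by ring
      rw [e, hA]
      nlinarith [hB, hε]
    linarith [hmain, hstep, hfin]
  have hle' : K.g p ≤ T⁻¹ := by
    by_contra hcon
    push_neg at hcon
    have := hle ((K.g p - T⁻¹) / 2) (by linarith)
    linarith
  have hgeq : K.g p = T⁻¹ := le_antisymm hle' hge
  refine ⟨?_, gpos, ?_⟩
  · rw [hgeq]; exact inv_pos.2 hT0
  · rw [hgeq, inv_inv, hT]
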